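/- Let n₂ ≥ 3 be a constant, and let G ∈ G_{n₁,n₂,p} with n₁ → ∞ and n₁^{−1/2} ≪ p ≪ n₁^{−1/3}. Then asymptotically almost surely: (i) no vertex of the part of size n₁ has degree ≥ 3; (ii) for every pair of vertices {y, y'} in the part of size n₂, the number of vertices in the large part adjacent to exactly {y, y'} is at least 1 (indeed is (1+o(1))p²n₁). -/

import Mathlib

open MeasureTheory Filter
open scoped ENNReal

/-- The Bernoulli measure on `Bool` with success probability `p`. -/
noncomputable def bern (p : ℝ) : Measure Bool :=
  (ENNReal.ofReal (1 - p)) • Measure.dirac false + (ENNReal.ofReal p) • Measure.dirac true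


lemma bern_true {p : ℝ} (h0 : 0 ≤ p) : bern p {true} = ENNReal.ofReal p := by
  simp [bern]

lemma bern_false {p : ℝ} (h1 : p ≤ 1) : bern p {false} = ENNReal.ofReal (1 - p) := by
  simp [bern]

lemma bern_prob {p : ℝ} (h0 : 0 ≤ p) (h1 : p ≤ 1) : IsProbabilityMeasure (bern p) := by
  constructor
  simp [bern, ← ENNReal.ofReal_add (by linarith : (0:ℝ) ≤ 1 - p) h0]

/-- The random bipartite graph `G_{n₁,n₂,p}`. -/
noncomputable def bipMeasure (n₁ n₂ : ℕ) (p : ℝ) :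
    Measure (Fin n₁ × Fin n₂ → Bool) :=
  Measure.pi fun _ => bern p


lemma measSet {n₁ n₂ : ℕ} (S : Set (Fin n₁ × Fin n₂ → Bool)) : MeasurableSet S :=
  S.toFinite.measurableSet

lemma bip_prob (n₁ n₂ : ℕ) {p : ℝ} (h0 : 0 ≤ p) (h1 : p ≤ 1) :
    IsProbabilityMeasure (bipMeasure n₁ n₂ p) := by
  haveI := bern_prob h0 h1
  unfold bipMeasure
  infer_instance

lemma bip_singleton (n₁ n₂ : ℕ) {p : ℝ} (h0 : 0 ≤ p) (h1 : p ≤ 1)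
    (ω : Fin n₁ × Fin n₂ → Bool) :
    bipMeasure n₁ n₂ p {ω} = ∏ i, bern p {ω i} := by
  haveI := bern_prob h0 h1
  rw [← Set.univ_pi_singleton, bipMeasure, Measure.pi_pi]

lemma bip_sum (n₁ n₂ : ℕ) {p : ℝ} (h0 : 0 ≤ p) (h1 : p ≤ 1)
    (S : Set (Fin n₁ × Fin n₂ → Bool)) [DecidablePred (· ∈ S)] :
    bipMeasure n₁ n₂ p S = ∑ ω ∈ Finset.univ.filter (· ∈ S), ∏ i, bern p {ω i} := by
  have hS : S = ⋃ ω ∈ (Finset.univ.filter (· ∈ S) : Finset _), ({ω} : Set _) := by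
    ext ω; simp
  rw [congrArg (bipMeasure n₁ n₂ p) hS, measure_biUnion_finset]
  · exact Finset.sum_congr rfl fun ω _ => bip_singleton n₁ n₂ h0 h1 ω
  · intro a _ b _ hab
    simp [Function.onFun, hab]
  · intro ω _; exact measurableSet_singleton ω

lemma bern_sum {p : ℝ} (h0 : 0 ≤ p) (h1 : p ≤ 1) :
    ∑ v : Bool, bern p {v} = 1 := by
  rw [Fintype.sum_bool, bern_true h0, bern_false h1,
    ← ENNReal.ofReal_add h0 (by linarith), ENNReal.ofReal_eq_one]
  ring

lemma pair_event (n₁ n₂ : ℕ) {p : ℝ} (h0 : 0 ≤ p) (h1 : p ≤ 1) (f : Fin n₂ → Bool) :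
    bipMeasure n₁ n₂ p {ω | ∀ x, (fun z => ω (x, z)) ≠ f}
      = (1 - ∏ z, bern p {f z}) ^ n₁ := by
  classical
  rw [bip_sum n₁ n₂ h0 h1, Finset.sum_filter]
  have step1 : ∀ ω : Fin n₁ × Fin n₂ → Bool,
      (if ω ∈ {ω : Fin n₁ × Fin n₂ → Bool | ∀ x, (fun z => ω (x, z)) ≠ f} then
        ∏ i, bern p {ω i} else 0)
      = ∏ x, (if (fun z => ω (x, z)) ≠ f then ∏ z, bern p {ω (x, z)} else 0) := by
    intro ω
    simp only [Set.mem_setOf_eq]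
    by_cases h : ∀ x, (fun z => ω (x, z)) ≠ f
    · rw [if_pos h, Fintype.prod_prod_type]
      exact Finset.prod_congr rfl fun x _ => (if_pos (h x)).symm
    · rw [if_neg h]
      obtain ⟨x, hx⟩ := not_forall.mp h
      exact (Finset.prod_eq_zero (Finset.mem_univ x)
        (show (if (fun z => ω (x, z)) ≠ f then ∏ z, bern p {ω (x, z)} else 0) = 0
          from if_neg hx)).symm
  rw [Finset.sum_congr rfl fun ω _ => step1 ω]
  have step2 : (∑ ω : Fin n₁ × Fin n₂ → Bool,
      ∏ x, (if (fun z => ω (x, z)) ≠ f then ∏ z, bern p {ω (x, z)} else 0))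
      = ∑ h : Fin n₁ → Fin n₂ → Bool, ∏ x, (if h x ≠ f then ∏ z, bern p {h x z} else 0) :=
    Fintype.sum_equiv (Equiv.curry (Fin n₁) (Fin n₂) Bool) _ _ (fun ω => rfl)
  rw [step2]
  rw [← Fintype.prod_sum fun (_ : Fin n₁) (g : Fin n₂ → Bool) =>
      (if g ≠ f then ∏ z, bern p {g z} else 0)]
  have hinner : ∑ g : Fin n₂ → Bool, (if g ≠ f then ∏ z, bern p {g z} else 0)
      = 1 - ∏ z, bern p {f z} := by
    have htot : ∑ g : Fin n₂ → Bool, ∏ z, bern p {g z} = 1 := by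
      rw [← Fintype.prod_sum fun (_ : Fin n₂) (v : Bool) => bern p {v}]
      simp only [bern_sum h0 h1, Finset.prod_const_one]
    have hnt : (∏ z, bern p {f z}) ≠ ⊤ := by
      refine ENNReal.prod_ne_top fun z _ => ?_
      cases f z
      · rw [bern_false h1]; exact ENNReal.ofReal_ne_top
      · rw [bern_true h0]; exact ENNReal.ofReal_ne_top
    refine ENNReal.eq_sub_of_add_eq hnt ?_
    rw [← htot]
    have : ∀ g : Fin n₂ → Bool, (if g ≠ f then ∏ z, bern p {g z} else 0)
        + (if g = f then ∏ z, bern p {g z} else 0) = ∏ z, bern p {g z} := by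
      intro g; by_cases h : g = f <;> simp [h]
    rw [← Finset.sum_congr rfl fun g _ => this g, Finset.sum_add_distrib,
      Finset.sum_ite_eq' Finset.univ f fun g => ∏ z, bern p {g z}]
    simp
  rw [hinner]
  simp

lemma cyl_meas (n₁ n₂ : ℕ) {p : ℝ} (h0 : 0 ≤ p) (h1 : p ≤ 1) (x : Fin n₁)
    (S : Finset (Fin n₂)) :
    bipMeasure n₁ n₂ p {ω | ∀ y ∈ S, ω (x, y) = true}
      = ENNReal.ofReal p ^ S.card := by
  classical
  haveI := bern_prob h0 h1
  have hset : {ω : Fin n₁ × Fin n₂ → Bool | ∀ y ∈ S, ω (x, y) = true}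
      = Set.pi Set.univ
        (fun i : Fin n₁ × Fin n₂ => if i.1 = x ∧ i.2 ∈ S then {true} else Set.univ) := by
    ext ω
    simp only [Set.mem_setOf_eq, Set.mem_pi, Set.mem_univ, forall_true_left]
    constructor
    · rintro h ⟨a, b⟩
      by_cases hc : a = x ∧ b ∈ S
      · rw [if_pos hc, Set.mem_singleton_iff, hc.1]; exact h b hc.2
      · rw [if_neg hc]; trivial
    · intro h y hy
      have := h (x, y)
      rwa [if_pos ⟨rfl, hy⟩, Set.mem_singleton_iff] at this
  rw [hset, bipMeasure, Measure.pi_pi]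
  have : ∀ i : Fin n₁ × Fin n₂,
      bern p (if i.1 = x ∧ i.2 ∈ S then {true} else Set.univ)
        = if i.1 = x ∧ i.2 ∈ S then ENNReal.ofReal p else 1 := by
    intro i
    by_cases hc : i.1 = x ∧ i.2 ∈ S
    · rw [if_pos hc, if_pos hc, bern_true h0]
    · rw [if_neg hc, if_neg hc, measure_univ]
  rw [Finset.prod_congr rfl fun i _ => this i, Finset.prod_ite, Finset.prod_const,
    Finset.prod_const, one_pow, mul_one]
  congr 1
  have : Finset.univ.filter (fun i : Fin n₁ × Fin n₂ => i.1 = x ∧ i.2 ∈ S)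
      = {x} ×ˢ S := by
    ext ⟨a, b⟩
    simp only [Finset.mem_filter, Finset.mem_univ, true_and, Finset.mem_product,
      Finset.mem_singleton]
  rw [this, Finset.card_product, Finset.card_singleton, one_mul]

lemma pair_prod (n₂ : ℕ) {p : ℝ} (h0 : 0 ≤ p) (h1 : p ≤ 1) {y y' : Fin n₂}
    (hne : y ≠ y') :
    ∏ z : Fin n₂, bern p {decide (z = y ∨ z = y')}
      = ENNReal.ofReal (p ^ 2 * (1 - p) ^ (n₂ - 2)) := by
  classical
  have : ∀ z : Fin n₂, bern p {decide (z = y ∨ z = y')}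
      = if z = y ∨ z = y' then ENNReal.ofReal p else ENNReal.ofReal (1 - p) := by
    intro z
    by_cases hc : z = y ∨ z = y'
    · simp [hc, bern_true h0]
    · simp [hc, bern_false h1]
  rw [Finset.prod_congr rfl fun z _ => this z, Finset.prod_ite, Finset.prod_const,
    Finset.prod_const]
  have hfil : Finset.univ.filter (fun z : Fin n₂ => z = y ∨ z = y') = {y, y'} := by
    ext z; simp [Finset.mem_insert]
  have hcard : (Finset.univ.filter (fun z : Fin n₂ => z = y ∨ z = y')).card = 2 := by
    rw [hfil, Finset.card_insert_of_notMem (by simp [hne]), Finset.card_singleton]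
  have hcard' : (Finset.univ.filter (fun z : Fin n₂ => ¬(z = y ∨ z = y'))).card = n₂ - 2 := by
    rw [Finset.filter_not, Finset.card_sdiff_of_subset (Finset.filter_subset _ _), hcard,
      Finset.card_univ, Fintype.card_fin]
  rw [hcard, hcard', ENNReal.ofReal_mul (by positivity), ENNReal.ofReal_pow h0,
    ENNReal.ofReal_pow (by linarith)]

/-- The degree of a vertex `x` of the part of size `n₁`. -/
def degX {n₁ n₂ : ℕ} (ω : Fin n₁ × Fin n₂ → Bool) (x : Fin n₁) : ℕ :=
  (Finset.univ.filter fun y : Fin n₂ => ω (x, y) = true).card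


lemma partA (n₂ N : ℕ) {r : ℝ} (h0 : 0 ≤ r) (h1 : r ≤ 1) :
    bipMeasure N n₂ r {ω | ¬ ∀ x, degX ω x ≤ 2}
      ≤ ENNReal.ofReal ((N : ℝ) * (n₂ : ℝ) ^ 3 * r ^ 3) := by
  classical
  have hA : {ω : Fin N × Fin n₂ → Bool | ¬ ∀ x, degX ω x ≤ 2}
      ⊆ ⋃ x ∈ (Finset.univ : Finset (Fin N)),
          ⋃ S ∈ Finset.powersetCard 3 (Finset.univ : Finset (Fin n₂)),
            {ω | ∀ y ∈ S, ω (x, y) = true} := by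
    intro ω hω
    obtain ⟨x, hx⟩ := not_forall.mp hω
    have h3 : 3 ≤ degX ω x := by omega
    obtain ⟨S, hSsub, hScard⟩ := Finset.exists_subset_card_eq h3
    simp only [Set.mem_iUnion]
    refine ⟨x, Finset.mem_univ x, S, Finset.mem_powersetCard.2
      ⟨Finset.subset_univ S, hScard⟩, fun y hy => ?_⟩
    exact (Finset.mem_filter.mp (hSsub hy)).2
  calc bipMeasure N n₂ r {ω | ¬ ∀ x, degX ω x ≤ 2}
      ≤ bipMeasure N n₂ r (⋃ x ∈ (Finset.univ : Finset (Fin N)),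
          ⋃ S ∈ Finset.powersetCard 3 (Finset.univ : Finset (Fin n₂)),
            {ω | ∀ y ∈ S, ω (x, y) = true}) := measure_mono hA
    _ ≤ ∑ x : Fin N, bipMeasure N n₂ r (⋃ S ∈ Finset.powersetCard 3
          (Finset.univ : Finset (Fin n₂)), {ω | ∀ y ∈ S, ω (x, y) = true}) :=
        measure_biUnion_finset_le _ _
    _ ≤ ∑ x : Fin N, ∑ S ∈ Finset.powersetCard 3 (Finset.univ : Finset (Fin n₂)),
          ENNReal.ofReal r ^ 3 := by
        refine Finset.sum_le_sum fun x _ => ?_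
        refine le_trans (measure_biUnion_finset_le _ _) ?_
        refine Finset.sum_le_sum fun S hS => ?_
        rw [cyl_meas N n₂ h0 h1 x S, (Finset.mem_powersetCard.mp hS).2]
    _ = (N : ℝ≥0∞) * (n₂.choose 3 : ℕ) * ENNReal.ofReal r ^ 3 := by
        simp only [Finset.sum_const, Finset.card_powersetCard, Finset.card_univ,
          Fintype.card_fin, nsmul_eq_mul, Nat.cast_mul]
        ring
    _ = ENNReal.ofReal ((N : ℝ) * (n₂.choose 3 : ℝ) * r ^ 3) := by
        rw [ENNReal.ofReal_mul (by positivity), ENNReal.ofReal_mul (by positivity),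
          ENNReal.ofReal_natCast, ENNReal.ofReal_natCast, ENNReal.ofReal_pow h0]
    _ ≤ ENNReal.ofReal ((N : ℝ) * (n₂ : ℝ) ^ 3 * r ^ 3) := by
        refine ENNReal.ofReal_le_ofReal ?_
        have hc : ((n₂.choose 3 : ℕ) : ℝ) ≤ ((n₂ : ℝ)) ^ 3 := by
          exact_mod_cast Nat.choose_le_pow n₂ 3
        have hr3 : (0:ℝ) ≤ r ^ 3 := by positivity
        have hN : (0:ℝ) ≤ (N : ℝ) := Nat.cast_nonneg _
        nlinarith [mul_le_mul_of_nonneg_left hc hN]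

lemma partB (n₂ N : ℕ) {r : ℝ} (h0 : 0 ≤ r) (h1 : r ≤ 1) :
    bipMeasure N n₂ r {ω | ¬ ∀ y y' : Fin n₂, y ≠ y' →
        ∃ x : Fin N, ∀ z : Fin n₂, ω (x, z) = true ↔ (z = y ∨ z = y')}
      ≤ ENNReal.ofReal ((n₂ : ℝ) ^ 2 * (1 - r ^ 2 * (1 - r) ^ (n₂ - 2)) ^ N) := by
  classical
  set q : ℝ := r ^ 2 * (1 - r) ^ (n₂ - 2) with hq
  have hq0 : 0 ≤ q := by
    rw [hq]
    exact mul_nonneg (by positivity) (pow_nonneg (by linarith) _)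
  have hq1 : q ≤ 1 := by
    have h2 : r ^ 2 ≤ 1 := pow_le_one₀ h0 h1
    have h3 : (1 - r) ^ (n₂ - 2) ≤ 1 := pow_le_one₀ (by linarith) (by linarith)
    nlinarith
  have hB : {ω : Fin N × Fin n₂ → Bool | ¬ ∀ y y' : Fin n₂, y ≠ y' →
        ∃ x : Fin N, ∀ z : Fin n₂, ω (x, z) = true ↔ (z = y ∨ z = y')}
      ⊆ ⋃ yy ∈ (Finset.univ : Finset (Fin n₂ × Fin n₂)).filter (fun yy => yy.1 ≠ yy.2),
          {ω | ∀ x : Fin N, (fun z => ω (x, z)) ≠ fun z => decide (z = yy.1 ∨ z = yy.2)} := by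
    intro ω hω
    push_neg at hω
    obtain ⟨y, y', hne, hnex⟩ := hω
    simp only [Set.mem_iUnion]
    refine ⟨(y, y'), Finset.mem_filter.2 ⟨Finset.mem_univ _, hne⟩, fun x hcon => ?_⟩
    obtain ⟨z, hz⟩ := hnex x
    have := congrFun hcon z
    simp only at this
    rw [this] at hz
    simp only [decide_eq_true_eq, ne_eq] at hz
    tauto
  calc bipMeasure N n₂ r _
      ≤ bipMeasure N n₂ r (⋃ yy ∈ (Finset.univ : Finset (Fin n₂ × Fin n₂)).filter
          (fun yy => yy.1 ≠ yy.2),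
          {ω | ∀ x : Fin N, (fun z => ω (x, z)) ≠ fun z => decide (z = yy.1 ∨ z = yy.2)}) :=
        measure_mono hB
    _ ≤ ∑ yy ∈ (Finset.univ : Finset (Fin n₂ × Fin n₂)).filter (fun yy => yy.1 ≠ yy.2),
          bipMeasure N n₂ r
            {ω | ∀ x : Fin N, (fun z => ω (x, z)) ≠ fun z => decide (z = yy.1 ∨ z = yy.2)} :=
        measure_biUnion_finset_le _ _
    _ ≤ ∑ yy ∈ (Finset.univ : Finset (Fin n₂ × Fin n₂)).filter (fun yy => yy.1 ≠ yy.2),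
          ENNReal.ofReal ((1 - q) ^ N) := by
        refine Finset.sum_le_sum fun yy hyy => ?_
        have hne := (Finset.mem_filter.mp hyy).2
        rw [pair_event N n₂ h0 h1, pair_prod n₂ h0 h1 hne, ← hq,
          ← ENNReal.ofReal_one, ← ENNReal.ofReal_sub 1 hq0,
          ← ENNReal.ofReal_pow (by linarith)]
    _ ≤ ENNReal.ofReal ((n₂ : ℝ) ^ 2 * (1 - q) ^ N) := by
        rw [Finset.sum_const, nsmul_eq_mul]
        have hcard : (((Finset.univ : Finset (Fin n₂ × Fin n₂)).filter
            (fun yy => yy.1 ≠ yy.2)).card : ℝ≥0∞) ≤ ((n₂ ^ 2 : ℕ) : ℝ≥0∞) := by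
          refine Nat.cast_le.2 ?_
          calc _ ≤ (Finset.univ : Finset (Fin n₂ × Fin n₂)).card :=
                Finset.card_filter_le _ _
            _ = n₂ ^ 2 := by simp [sq]
        refine le_trans (mul_le_mul_left hcard _) ?_
        rw [ENNReal.ofReal_mul (by positivity)]
        have hcast : ((n₂ ^ 2 : ℕ) : ℝ≥0∞) = ENNReal.ofReal ((n₂ : ℝ) ^ 2) := by
          rw [← ENNReal.ofReal_natCast]
          norm_num
        rw [hcast]

/-- Let `n₂ ≥ 3` be constant and `G ∈ G_{n₁,n₂,p}` with `n₁ → ∞` and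
`n₁^{−1/2} ≪ p ≪ n₁^{−1/3}`.  Then a.a.s. (i) no vertex of the part of size
`n₁` has degree ≥ 3, and (ii) for every pair `{y, y'}` of vertices in the part
of size `n₂` there is at least one vertex of the large part whose neighbourhood
is exactly `{y, y'}`. -/
theorem subdivision_of_complete_graph (n₂ : ℕ) (hn₂ : 3 ≤ n₂)
    (n₁ : ℕ → ℕ) (p : ℕ → ℝ) (hp : ∀ k, 0 ≤ p k ∧ p k ≤ 1)
    (hn₁ : Tendsto n₁ atTop atTop)
    (hplarge : Tendsto (fun k => p k * (n₁ k : ℝ) ^ ((1 : ℝ) / 2)) atTop atTop)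
    (hpsmall : Tendsto (fun k => p k * (n₁ k : ℝ) ^ ((1 : ℝ) / 3)) atTop (nhds 0)) :
    Tendsto
      (fun k => bipMeasure (n₁ k) n₂ (p k)
        {ω | (∀ x, degX ω x ≤ 2) ∧
          ∀ y y' : Fin n₂, y ≠ y' →
            ∃ x : Fin (n₁ k), ∀ z : Fin n₂, ω (x, z) = true ↔ (z = y ∨ z = y')})
      atTop (nhds 1) := by
  classical
  set good : ∀ k, Set (Fin (n₁ k) × Fin n₂ → Bool) := fun k =>
    {ω | (∀ x, degX ω x ≤ 2) ∧
      ∀ y y' : Fin n₂, y ≠ y' →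
        ∃ x : Fin (n₁ k), ∀ z : Fin n₂, ω (x, z) = true ↔ (z = y ∨ z = y')} with hgood
  set b : ℕ → ℝ := fun k =>
    (n₁ k : ℝ) * (n₂ : ℝ) ^ 3 * p k ^ 3
      + (n₂ : ℝ) ^ 2 * (1 - p k ^ 2 * (1 - p k) ^ (n₂ - 2)) ^ (n₁ k) with hb
  -- the union bound
  have hbound : ∀ k, bipMeasure (n₁ k) n₂ (p k) (good k)ᶜ ≤ ENNReal.ofReal (b k) := by
    intro k
    obtain ⟨h0, h1⟩ := hp k
    have hsub : (good k)ᶜ ⊆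
        {ω : Fin (n₁ k) × Fin n₂ → Bool | ¬ ∀ x, degX ω x ≤ 2}
          ∪ {ω | ¬ ∀ y y' : Fin n₂, y ≠ y' →
              ∃ x : Fin (n₁ k), ∀ z : Fin n₂, ω (x, z) = true ↔ (z = y ∨ z = y')} := by
      intro ω hω
      rw [Set.mem_compl_iff, hgood, Set.mem_setOf_eq, not_and_or] at hω
      exact hω.imp (fun h => h) (fun h => h)
    have ht1 : 0 ≤ (n₁ k : ℝ) * (n₂ : ℝ) ^ 3 * p k ^ 3 :=
      mul_nonneg (mul_nonneg (Nat.cast_nonneg _) (by positivity)) (pow_nonneg h0 3)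
    calc bipMeasure (n₁ k) n₂ (p k) (good k)ᶜ
        ≤ bipMeasure (n₁ k) n₂ (p k)
            ({ω : Fin (n₁ k) × Fin n₂ → Bool | ¬ ∀ x, degX ω x ≤ 2}
              ∪ {ω | ¬ ∀ y y' : Fin n₂, y ≠ y' →
                  ∃ x : Fin (n₁ k), ∀ z : Fin n₂, ω (x, z) = true ↔ (z = y ∨ z = y')}) :=
          measure_mono hsub
      _ ≤ bipMeasure (n₁ k) n₂ (p k) {ω : Fin (n₁ k) × Fin n₂ → Bool | ¬ ∀ x, degX ω x ≤ 2}
            + bipMeasure (n₁ k) n₂ (p k) {ω | ¬ ∀ y y' : Fin n₂, y ≠ y' →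
                ∃ x : Fin (n₁ k), ∀ z : Fin n₂, ω (x, z) = true ↔ (z = y ∨ z = y')} :=
          measure_union_le _ _
      _ ≤ ENNReal.ofReal ((n₁ k : ℝ) * (n₂ : ℝ) ^ 3 * p k ^ 3)
            + ENNReal.ofReal ((n₂ : ℝ) ^ 2 * (1 - p k ^ 2 * (1 - p k) ^ (n₂ - 2)) ^ (n₁ k)) :=
          add_le_add (partA n₂ (n₁ k) h0 h1) (partB n₂ (n₁ k) h0 h1)
      _ = ENNReal.ofReal (b k) := (ENNReal.ofReal_add ht1 (by
            have hq0 : 0 ≤ p k ^ 2 * (1 - p k) ^ (n₂ - 2) :=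
              mul_nonneg (by positivity) (pow_nonneg (by linarith) _)
            have hq1 : p k ^ 2 * (1 - p k) ^ (n₂ - 2) ≤ 1 := by
              have h2 : p k ^ 2 ≤ 1 := pow_le_one₀ h0 h1
              have h3 : (1 - p k) ^ (n₂ - 2) ≤ 1 := pow_le_one₀ (by linarith) (by linarith)
              nlinarith
            have := pow_nonneg (by linarith : (0:ℝ) ≤ 1 - p k ^ 2 * (1 - p k) ^ (n₂ - 2)) (n₁ k)
            positivity)).symm
  -- real analysis: b → 0
  have hr0 : Tendsto p atTop (nhds 0) := by
    have hev : ∀ᶠ k in atTop, p k ≤ p k * (n₁ k : ℝ) ^ ((1 : ℝ) / 3) := by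
      filter_upwards [hn₁.eventually_ge_atTop 1] with k hk
      have h1le : (1 : ℝ) ≤ (n₁ k : ℝ) ^ ((1 : ℝ) / 3) :=
        Real.one_le_rpow (by exact_mod_cast hk) (by norm_num)
      exact le_mul_of_one_le_right (hp k).1 h1le
    exact tendsto_of_tendsto_of_tendsto_of_le_of_le' tendsto_const_nhds hpsmall
      (Eventually.of_forall fun k => (hp k).1) hev
  have h1t : Tendsto (fun k => (n₁ k : ℝ) * (n₂ : ℝ) ^ 3 * p k ^ 3) atTop (nhds 0) := by
    have e1 : ∀ k, (n₁ k : ℝ) * (n₂ : ℝ) ^ 3 * p k ^ 3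
        = (n₂ : ℝ) ^ 3 * (p k * (n₁ k : ℝ) ^ ((1 : ℝ) / 3)) ^ 3 := by
      intro k
      rw [mul_pow, ← Real.rpow_natCast ((n₁ k : ℝ) ^ ((1 : ℝ) / 3)) 3,
        ← Real.rpow_mul (Nat.cast_nonneg _)]
      norm_num
      ring
    have := (hpsmall.pow 3).const_mul ((n₂ : ℝ) ^ 3)
    simp only [zero_pow, mul_zero, ne_eq, OfNat.ofNat_ne_zero, not_false_eq_true] at this
    exact (this.congr fun k => (e1 k).symm)
  have hqN : Tendsto (fun k => p k ^ 2 * (1 - p k) ^ (n₂ - 2) * (n₁ k : ℝ)) atTop atTop := by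
    have hsq : Tendsto (fun k => (p k * (n₁ k : ℝ) ^ ((1 : ℝ) / 2)) ^ 2) atTop atTop :=
      (tendsto_pow_atTop (two_ne_zero)).comp hplarge
    have hone : Tendsto (fun k => (1 - p k) ^ (n₂ - 2)) atTop (nhds 1) := by
      have := ((tendsto_const_nhds (x := (1:ℝ))).sub hr0).pow (n₂ - 2)
      simpa using this
    have hmul := hsq.atTop_mul_pos one_pos hone
    refine hmul.congr fun k => ?_
    rw [mul_pow, ← Real.rpow_natCast ((n₁ k : ℝ) ^ ((1 : ℝ) / 2)) 2,
      ← Real.rpow_mul (Nat.cast_nonneg _)]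
    norm_num
    ring
  have hexp : Tendsto (fun k => (n₂ : ℝ) ^ 2
      * Real.exp (-(p k ^ 2 * (1 - p k) ^ (n₂ - 2) * (n₁ k : ℝ)))) atTop (nhds 0) := by
    have := (Real.tendsto_exp_atBot.comp (tendsto_neg_atTop_atBot.comp hqN)).const_mul
      ((n₂ : ℝ) ^ 2)
    simpa [Function.comp] using this
  have h2t : Tendsto (fun k => (n₂ : ℝ) ^ 2
      * (1 - p k ^ 2 * (1 - p k) ^ (n₂ - 2)) ^ (n₁ k)) atTop (nhds 0) := by
    have hlow : ∀ k, (0:ℝ) ≤ (n₂ : ℝ) ^ 2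
        * (1 - p k ^ 2 * (1 - p k) ^ (n₂ - 2)) ^ (n₁ k) := by
      intro k
      obtain ⟨h0, h1⟩ := hp k
      have hq1 : p k ^ 2 * (1 - p k) ^ (n₂ - 2) ≤ 1 := by
        have h2 : p k ^ 2 ≤ 1 := pow_le_one₀ h0 h1
        have h3 : (1 - p k) ^ (n₂ - 2) ≤ 1 := pow_le_one₀ (by linarith) (by linarith)
        nlinarith
      exact mul_nonneg (by positivity) (pow_nonneg (by linarith) _)
    have hup : ∀ k, (n₂ : ℝ) ^ 2 * (1 - p k ^ 2 * (1 - p k) ^ (n₂ - 2)) ^ (n₁ k)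
        ≤ (n₂ : ℝ) ^ 2 * Real.exp (-(p k ^ 2 * (1 - p k) ^ (n₂ - 2) * (n₁ k : ℝ))) := by
      intro k
      obtain ⟨h0, h1⟩ := hp k
      set q := p k ^ 2 * (1 - p k) ^ (n₂ - 2) with hqdef
      have hq0 : 0 ≤ q := by
        rw [hqdef]; exact mul_nonneg (by positivity) (pow_nonneg (by linarith) _)
      have hq1 : q ≤ 1 := by
        rw [hqdef]
        have h2 : p k ^ 2 ≤ 1 := pow_le_one₀ h0 h1
        have h3 : (1 - p k) ^ (n₂ - 2) ≤ 1 := pow_le_one₀ (by linarith) (by linarith)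
        nlinarith
      refine mul_le_mul_of_nonneg_left ?_ (by positivity)
      have hstep : (1 - q) ≤ Real.exp (-q) := by
        have := Real.add_one_le_exp (-q)
        linarith
      calc (1 - q) ^ (n₁ k) ≤ Real.exp (-q) ^ (n₁ k) :=
            pow_le_pow_left₀ (by linarith) hstep _
        _ = Real.exp (-(q * (n₁ k : ℝ))) := by
            rw [← Real.exp_nat_mul]
            ring_nf
    exact tendsto_of_tendsto_of_tendsto_of_le_of_le tendsto_const_nhds hexp hlow hup
  have hbt : Tendsto b atTop (nhds 0) := by
    have := h1t.add h2t
    simpa using this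
  -- conclude in ℝ≥0∞
  have hcomp : Tendsto (fun k => bipMeasure (n₁ k) n₂ (p k) (good k)ᶜ) atTop (nhds 0) := by
    refine tendsto_of_tendsto_of_tendsto_of_le_of_le tendsto_const_nhds ?_
      (fun k => zero_le) hbound
    have := ENNReal.tendsto_ofReal hbt
    simpa using this
  have hμ : ∀ k, bipMeasure (n₁ k) n₂ (p k) (good k)
      = 1 - bipMeasure (n₁ k) n₂ (p k) (good k)ᶜ := by
    intro k
    haveI := bip_prob (n₁ k) n₂ (hp k).1 (hp k).2
    conv_lhs => rw [← compl_compl (good k)]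
    rw [prob_compl_eq_one_sub (measSet _)]
  have hfinal := ENNReal.Tendsto.sub (tendsto_const_nhds (x := (1 : ℝ≥0∞))) hcomp
    (Or.inl ENNReal.one_ne_top)
  simp only [tsub_zero] at hfinal
  exact (Tendsto.congr (fun k => (hμ k).symm) hfinal)
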